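/- Let C be a type, comp : C → C → Multiset C a composition rule satisfying condition (C2) and condition (C3) with neutral element e, and let K be a commutative ring. Then the induced multiplication mul on the free module C →₀ K is associative and Finsupp.single e (1 : K) is a two-sided unit: for all f g h : C →₀ K, mul f (mul g h) = mul (mul f g) h, mul (Finsupp.single e 1) f = f, and mul f (Finsupp.single e 1) = f. (Proposition 1, Algebra.) -/

import Mathlib

/-- The induced multiplication on the free module `C →₀ K`: the `K`-bilinear map
determined on basis vectors by
`mul (single Γ₂ 1) (single Γ₁ 1) = ((comp Γ₂ Γ₁).map (fun Γ => single Γ 1)).sum`. -/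
noncomputable def mulF {C : Type*} (K : Type*) [CommRing K]
    (comp : C → C → Multiset C) : (C →₀ K) →ₗ[K] (C →₀ K) →ₗ[K] (C →₀ K) :=
  Finsupp.lift ((C →₀ K) →ₗ[K] (C →₀ K)) K C fun Γ₂ =>
    Finsupp.lift (C →₀ K) K C fun Γ₁ =>
      ((comp Γ₂ Γ₁).map fun Γ => Finsupp.single Γ (1 : K)).sum

lemma mulF_single {C : Type*} (K : Type*) [CommRing K] (comp : C → C → Multiset C)
    (a b : C) :
    mulF K comp (Finsupp.single a (1 : K)) (Finsupp.single b 1) =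
      ((comp a b).map fun Γ => Finsupp.single Γ (1 : K)).sum := by
  simp [mulF]

lemma sum_bind_map {C M : Type*} [AddCommMonoid M] (s : Multiset C) (f : C → Multiset C)
    (g : C → M) :
    ((s.bind f).map g).sum = (s.map fun x => ((f x).map g).sum).sum := by
  rw [Multiset.map_bind, Multiset.sum_bind]

lemma assoc1 {C : Type*} (K : Type*) [CommRing K] (comp : C → C → Multiset C)
    (hC2 : ∀ Γ₃ Γ₂ Γ₁ : C,
      (comp Γ₂ Γ₁).bind (fun x => comp Γ₃ x) = (comp Γ₃ Γ₂).bind (fun x => comp x Γ₁))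
    (a b c : C) :
    mulF K comp (Finsupp.single a (1 : K))
        (mulF K comp (Finsupp.single b 1) (Finsupp.single c 1)) =
      mulF K comp (mulF K comp (Finsupp.single a 1) (Finsupp.single b 1))
        (Finsupp.single c 1) := by
  rw [mulF_single, mulF_single, map_multiset_sum,
    ← LinearMap.flip_apply (mulF K comp), map_multiset_sum]
  simp only [Multiset.map_map, Function.comp_def, LinearMap.flip_apply, mulF_single]
  rw [← sum_bind_map, ← sum_bind_map, hC2]

/-- Proposition 1 (Algebra): under conditions (C2) and (C3) the induced multiplication
is associative with two-sided unit `single e 1`. -/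
theorem stmt0 {C : Type*} (K : Type*) [CommRing K]
    (comp : C → C → Multiset C)
    (hC2 : ∀ Γ₃ Γ₂ Γ₁ : C,
      (comp Γ₂ Γ₁).bind (fun x => comp Γ₃ x) = (comp Γ₃ Γ₂).bind (fun x => comp x Γ₁))
    (e : C)
    (hC3l : ∀ Γ : C, comp e Γ = {Γ})
    (hC3r : ∀ Γ : C, comp Γ e = {Γ}) :
    (∀ f g h : C →₀ K, mulF K comp f (mulF K comp g h) = mulF K comp (mulF K comp f g) h) ∧
    (∀ f : C →₀ K, mulF K comp (Finsupp.single e 1) f = f) ∧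
    (∀ f : C →₀ K, mulF K comp f (Finsupp.single e 1) = f) := by
  refine ⟨?_, ?_, ?_⟩
  · intro f g h
    induction f using Finsupp.induction_linear with
    | zero => simp
    | add f₁ f₂ ih₁ ih₂ => simp [ih₁, ih₂]
    | single a k =>
      induction g using Finsupp.induction_linear with
      | zero => simp
      | add g₁ g₂ ih₁ ih₂ => simp [ih₁, ih₂]
      | single b l =>
        induction h using Finsupp.induction_linear with
        | zero => simp
        | add h₁ h₂ ih₁ ih₂ => simp [ih₁, ih₂]
        | single c m =>
          rw [← Finsupp.smul_single_one a k, ← Finsupp.smul_single_one b l,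
            ← Finsupp.smul_single_one c m]
          simp only [map_smul, LinearMap.smul_apply, map_smul]
          rw [assoc1 K comp hC2 a b c]
  · intro f
    induction f using Finsupp.induction_linear with
    | zero => simp
    | add f₁ f₂ ih₁ ih₂ => simp [ih₁, ih₂]
    | single a k =>
      rw [← Finsupp.smul_single_one a k, map_smul]
      rw [mulF_single, hC3l]
      simp
  · intro f
    induction f using Finsupp.induction_linear with
    | zero => simp
    | add f₁ f₂ ih₁ ih₂ => simp [ih₁, ih₂]
    | single a k =>
      rw [← Finsupp.smul_single_one a k, map_smul, LinearMap.smul_apply]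
      rw [mulF_single, hC3r]
      simp
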